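/- Let A, B ∈ ℝ^{p×p} be symmetric with B positive definite, let 1 ≤ q ≤ p, and let ℓ_q(A,B) be the q-th largest eigenvalue of B^{−1/2} A B^{−1/2}. Then the q largest eigenvalues of the matrix A − ℓ_q(A,B) · B are all nonnegative, i.e., λ_j(A − ℓ_q(A,B) B) ≥ 0 for j = 1, ..., q, where λ_1(M) ≥ ... ≥ λ_p(M) are the decreasingly sorted eigenvalues of a symmetric matrix M. -/

import Mathlib

open Matrix Finset

/-- The positive semidefinite square root of a positive semidefinite matrix, as
`Matrix.PosSemidef.sqrt` was defined in Mathlib (Dec 2024); it has since been removed. -/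
noncomputable def Matrix.PosSemidef.sqrt {n 𝕜 : Type*} [Fintype n] [DecidableEq n] [RCLike 𝕜]
    [PartialOrder 𝕜] [StarOrderedRing 𝕜] {A : Matrix n n 𝕜} (hA : A.PosSemidef) : Matrix n n 𝕜 :=
  (hA.1.eigenvectorUnitary : Matrix n n 𝕜) *
    diagonal (fun i => ((Real.sqrt (hA.1.eigenvalues i) : ℝ) : 𝕜)) *
    (star hA.1.eigenvectorUnitary : Matrix n n 𝕜)

lemma psd_sqrt_isHermitian {n : Type*} [Fintype n] [DecidableEq n] {A : Matrix n n ℝ}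
    (hA : A.PosSemidef) : (hA.sqrt).IsHermitian := by
  unfold Matrix.IsHermitian Matrix.PosSemidef.sqrt
  rw [Matrix.conjTranspose_mul, Matrix.conjTranspose_mul, Matrix.diagonal_conjTranspose,
    Matrix.star_eq_conjTranspose, Matrix.conjTranspose_conjTranspose, star_trivial,
    Matrix.mul_assoc]

lemma psd_sqrt_mul_self {n : Type*} [Fintype n] [DecidableEq n] {A : Matrix n n ℝ}
    (hA : A.PosSemidef) : hA.sqrt * hA.sqrt = A := by
  unfold Matrix.PosSemidef.sqrt
  have hU : (star hA.1.eigenvectorUnitary : Matrix n n ℝ) * hA.1.eigenvectorUnitary = 1 :=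
    Unitary.coe_star_mul_self _
  have hD : diagonal (fun i => ((Real.sqrt (hA.1.eigenvalues i) : ℝ) : ℝ)) *
      diagonal (fun i => ((Real.sqrt (hA.1.eigenvalues i) : ℝ) : ℝ))
      = diagonal (RCLike.ofReal ∘ hA.1.eigenvalues) := by
    rw [Matrix.diagonal_mul_diagonal]
    congr 1
    funext i
    simp [Real.mul_self_sqrt (hA.eigenvalues_nonneg i)]
  conv_rhs => rw [hA.1.spectral_theorem]
  rw [Unitary.conjStarAlgAut_apply, ← hD]
  simp only [Matrix.mul_assoc]
  rw [← Matrix.mul_assoc (star _ : Matrix n n ℝ) (hA.1.eigenvectorUnitary : Matrix n n ℝ), hU,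
    Matrix.one_mul]
  rfl
/-- `μ` is the decreasingly sorted spectrum of the (symmetric) matrix `M`:
`μ 0 ≥ μ 1 ≥ ⋯ ≥ μ (p-1)` and `M = V diag(μ) Vᵀ` for some orthogonal `V`. -/
def IsSortedSpectrum {p : ℕ} (M : Matrix (Fin p) (Fin p) ℝ) (μ : Fin p → ℝ) : Prop :=
  (∀ i j : Fin p, i ≤ j → μ j ≤ μ i) ∧
  ∃ V : Matrix (Fin p) (Fin p) ℝ, Vᵀ * V = 1 ∧ M = V * Matrix.diagonal μ * Vᵀ

/-- selection matrix with columns the basis vectors `e l` -/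
noncomputable def selMat {p k : ℕ} (e : Fin k → Fin p) : Matrix (Fin p) (Fin k) ℝ :=
  Matrix.of fun i l => if e l = i then (1 : ℝ) else 0

lemma selMat_mulVec_apply {p k : ℕ} {e : Fin k → Fin p} (he : Function.Injective e)
    (z : Fin k → ℝ) (l : Fin k) :
    ((selMat e) *ᵥ z) (e l) = z l := by
  simp only [selMat, Matrix.mulVec, dotProduct, Matrix.of_apply, he.eq_iff, ite_mul, one_mul,
    zero_mul]
  simp

lemma selMat_mulVec_zero {p k : ℕ} (e : Fin k → Fin p) (z : Fin k → ℝ) (i : Fin p)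
    (h : ∀ l, e l ≠ i) : ((selMat e) *ᵥ z) i = 0 := by
  simp only [selMat, Matrix.mulVec, dotProduct, Matrix.of_apply]
  exact Finset.sum_eq_zero fun l _ => by simp [h l]

lemma conj_dotProduct {m n : ℕ} (C : Matrix (Fin m) (Fin n) ℝ) (M : Matrix (Fin m) (Fin m) ℝ)
    (y : Fin n → ℝ) :
    (C *ᵥ y) ⬝ᵥ (M *ᵥ (C *ᵥ y)) = y ⬝ᵥ ((Cᵀ * M * C) *ᵥ y) := by
  rw [← Matrix.mulVec_mulVec, ← Matrix.mulVec_mulVec, Matrix.dotProduct_mulVec y,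
    Matrix.vecMul_transpose]

lemma dot_diag {p : ℕ} (d y : Fin p → ℝ) :
    y ⬝ᵥ ((Matrix.diagonal d) *ᵥ y) = ∑ i, d i * y i ^ 2 := by
  simp only [dotProduct, Matrix.mulVec_diagonal]
  exact Finset.sum_congr rfl fun i _ => by ring

lemma sandwich {p : ℕ} (V D : Matrix (Fin p) (Fin p) ℝ) (hV : Vᵀ * V = 1) :
    Vᵀ * (V * D * Vᵀ) * V = D := by
  calc Vᵀ * (V * D * Vᵀ) * V = (Vᵀ * V) * D * (Vᵀ * V) := by
        simp only [Matrix.mul_assoc]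
    _ = D := by rw [hV, Matrix.one_mul, Matrix.mul_one]

/-- for symmetric `A`, positive definite `B` and `1 ≤ q ≤ p`, with
`ℓ_q(A,B)` the `q`-th largest eigenvalue of `B^{-1/2} A B^{-1/2}`, the `q` largest
eigenvalues of `A − ℓ_q(A,B) · B` are all nonnegative. -/
theorem generalized_eigenvalue_shift_top_nonneg
    {p : ℕ} (q : ℕ) (hq1 : 1 ≤ q) (hqp : q ≤ p)
    (A B : Matrix (Fin p) (Fin p) ℝ)
    (hA : A.IsSymm) (hB : B.PosDef)
    (ℓ : Fin p → ℝ)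
    (hℓ : IsSortedSpectrum
      ((hB.posSemidef.sqrt)⁻¹ * A * (hB.posSemidef.sqrt)⁻¹) ℓ)
    (ν : Fin p → ℝ)
    (hν : IsSortedSpectrum (A - ℓ ⟨q - 1, by omega⟩ • B) ν) :
    ∀ j : Fin p, (j : ℕ) < q → 0 ≤ ν j := by
  intro j hj
  by_contra hneg
  push_neg at hneg
  set R : Matrix (Fin p) (Fin p) ℝ := hB.posSemidef.sqrt with hRdef
  set c : ℝ := ℓ ⟨q - 1, by omega⟩ with hc
  set M : Matrix (Fin p) (Fin p) ℝ := A - c • B with hM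
  obtain ⟨hℓmono, V, hV, hS⟩ := hℓ
  obtain ⟨hνmono, W, hW, hMW⟩ := hν
  -- basic facts about R
  have hRsym : Rᵀ = R := by
    rw [← Matrix.conjTranspose_eq_transpose_of_trivial]
    exact psd_sqrt_isHermitian hB.posSemidef
  have hRR : R * R = B := psd_sqrt_mul_self hB.posSemidef
  have hRdet : IsUnit R.det := by
    have h : R.det * R.det = B.det := by rw [← Matrix.det_mul, hRR]
    have hBd : 0 < B.det := hB.det_pos
    refine isUnit_iff_ne_zero.mpr fun h0 => ?_
    rw [h0, mul_zero] at h
    linarith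
  have hRiT : (R⁻¹)ᵀ = R⁻¹ := by rw [Matrix.transpose_nonsing_inv, hRsym]
  have h1 : R⁻¹ * B * R⁻¹ = 1 := by
    rw [← hRR, ← Matrix.mul_assoc, Matrix.nonsing_inv_mul R hRdet, Matrix.one_mul,
      Matrix.mul_nonsing_inv R hRdet]
  -- determinants of V and W
  have hVdet : IsUnit V.det := by
    have h := congrArg Matrix.det hV
    rw [Matrix.det_mul, Matrix.det_transpose, Matrix.det_one] at h
    exact IsUnit.of_mul_eq_one _ h
  have hWdet : IsUnit W.det := by
    have h := congrArg Matrix.det hW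
    rw [Matrix.det_mul, Matrix.det_transpose, Matrix.det_one] at h
    exact IsUnit.of_mul_eq_one _ h
  set C1 : Matrix (Fin p) (Fin p) ℝ := R⁻¹ * V with hC1
  have hC1det : IsUnit C1.det := by
    rw [hC1, Matrix.det_mul]
    exact (Matrix.isUnit_nonsing_inv_det R hRdet).mul hVdet
  have hC1inj : Function.Injective (C1.mulVec) :=
    Matrix.mulVec_injective_iff_isUnit.mpr ((Matrix.isUnit_iff_isUnit_det _).mpr hC1det)
  have hWinj : Function.Injective (W.mulVec) :=
    Matrix.mulVec_injective_iff_isUnit.mpr ((Matrix.isUnit_iff_isUnit_det _).mpr hWdet)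
  -- key congruence identities
  have key1 : C1ᵀ * M * C1 = Matrix.diagonal (fun i => ℓ i - c) := by
    have hCT : C1ᵀ = Vᵀ * R⁻¹ := by rw [hC1, Matrix.transpose_mul, hRiT]
    have expand : (Vᵀ * R⁻¹) * (A - c • B) * (R⁻¹ * V)
        = Vᵀ * ((R⁻¹ * A * R⁻¹) * V) - c • (Vᵀ * ((R⁻¹ * B * R⁻¹) * V)) := by
      simp only [Matrix.mul_sub, Matrix.sub_mul, Matrix.mul_smul, Matrix.smul_mul,
        Matrix.mul_assoc]
    have e1 : Vᵀ * ((V * Matrix.diagonal ℓ * Vᵀ) * V) = Matrix.diagonal ℓ := by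
      rw [← Matrix.mul_assoc]; exact sandwich V _ hV
    rw [hCT, hC1, hM, expand, hS, h1, Matrix.one_mul, hV, e1, Matrix.smul_one_eq_diagonal,
      Matrix.diagonal_sub]
  have key2 : Wᵀ * M * W = Matrix.diagonal ν := by
    rw [hMW]; exact sandwich W _ hW
  -- the two subspaces
  have hjp : (j : ℕ) < p := j.isLt
  let e1f : Fin q → Fin p := Fin.castLE hqp
  have he1 : Function.Injective e1f := Fin.castLE_injective hqp
  let e2f : Fin (p - (j : ℕ)) → Fin p := fun k => ⟨(j : ℕ) + (k : ℕ), by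
    have := k.isLt; omega⟩
  have he2 : Function.Injective e2f := by
    intro a b h
    have : (j : ℕ) + (a : ℕ) = (j : ℕ) + (b : ℕ) := congrArg Fin.val h
    exact Fin.ext (by omega)
  set T1 : Submodule ℝ (Fin p → ℝ) := LinearMap.range ((C1 * selMat e1f).mulVecLin) with hT1def
  set T2 : Submodule ℝ (Fin p → ℝ) := LinearMap.range ((W * selMat e2f).mulVecLin) with hT2def
  -- dimensions
  have hinj1 : Function.Injective ((C1 * selMat e1f).mulVecLin) := by
    intro z z' h
    simp only [Matrix.mulVecLin_apply, ← Matrix.mulVec_mulVec] at h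
    have h2 := hC1inj h
    funext l
    rw [← selMat_mulVec_apply he1 z l, ← selMat_mulVec_apply he1 z' l, h2]
  have hinj2 : Function.Injective ((W * selMat e2f).mulVecLin) := by
    intro z z' h
    simp only [Matrix.mulVecLin_apply, ← Matrix.mulVec_mulVec] at h
    have h2 := hWinj h
    funext l
    rw [← selMat_mulVec_apply he2 z l, ← selMat_mulVec_apply he2 z' l, h2]
  have hdim1 : Module.finrank ℝ T1 = q := by
    rw [hT1def, LinearMap.finrank_range_of_inj hinj1, Module.finrank_fin_fun]
  have hdim2 : Module.finrank ℝ T2 = p - (j : ℕ) := by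
    rw [hT2def, LinearMap.finrank_range_of_inj hinj2, Module.finrank_fin_fun]
  have hsum := Submodule.finrank_sup_add_finrank_inf_eq T1 T2
  have hle : Module.finrank ℝ ↥(T1 ⊔ T2) ≤ p := by
    have h := Submodule.finrank_le (T1 ⊔ T2)
    rwa [Module.finrank_fin_fun] at h
  have hpos : 0 < Module.finrank ℝ ↥(T1 ⊓ T2) := by
    rw [hdim1, hdim2] at hsum
    omega
  obtain ⟨x, hx0⟩ := Module.finrank_pos_iff_exists_ne_zero.mp hpos
  have hx1 : (x : Fin p → ℝ) ∈ T1 := x.2.1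
  have hx2 : (x : Fin p → ℝ) ∈ T2 := x.2.2
  have hxne : (x : Fin p → ℝ) ≠ 0 := by
    intro h
    exact hx0 (Subtype.ext h)
  -- quadratic form is nonnegative on T1
  obtain ⟨z1, hz1⟩ := hx1
  obtain ⟨z2, hz2⟩ := hx2
  simp only [Matrix.mulVecLin_apply, ← Matrix.mulVec_mulVec] at hz1 hz2
  set y1 : Fin p → ℝ := (selMat e1f) *ᵥ z1 with hy1
  set y2 : Fin p → ℝ := (selMat e2f) *ᵥ z2 with hy2
  have hq1' : (x : Fin p → ℝ) ⬝ᵥ (M *ᵥ (x : Fin p → ℝ)) = ∑ i, (ℓ i - c) * y1 i ^ 2 := by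
    rw [← hz1, conj_dotProduct, key1, dot_diag]
  have hq2' : (x : Fin p → ℝ) ⬝ᵥ (M *ᵥ (x : Fin p → ℝ)) = ∑ i, ν i * y2 i ^ 2 := by
    rw [← hz2, conj_dotProduct, key2, dot_diag]
  -- nonnegativity
  have hnn : 0 ≤ ∑ i, (ℓ i - c) * y1 i ^ 2 := by
    refine Finset.sum_nonneg fun i _ => ?_
    by_cases h : (i : ℕ) < q
    · have hle : ℓ i - c ≥ 0 := by
        rw [hc]
        have : i ≤ (⟨q - 1, by omega⟩ : Fin p) := by
          rw [Fin.le_def]; simp; omega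
        have := hℓmono i ⟨q - 1, by omega⟩ this
        linarith
      positivity
    · have hz : y1 i = 0 := by
        refine selMat_mulVec_zero e1f z1 i fun l hl => ?_
        have hv : ((e1f l : Fin p) : ℕ) = (i : ℕ) := congrArg Fin.val hl
        have hv2 : ((e1f l : Fin p) : ℕ) = (l : ℕ) := rfl
        have hlq := l.isLt
        omega
      rw [hz]
      simp
  -- negativity
  have hy2ne : y2 ≠ 0 := by
    intro h
    apply hxne
    rw [← hz2, h, Matrix.mulVec_zero]
  obtain ⟨i0, hi0⟩ := Function.ne_iff.mp hy2ne
  have hi0j : (j : ℕ) ≤ (i0 : ℕ) := by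
    by_contra hlt
    push_neg at hlt
    apply hi0
    refine selMat_mulVec_zero e2f z2 i0 fun l hl => ?_
    have hv : ((e2f l : Fin p) : ℕ) = (i0 : ℕ) := congrArg Fin.val hl
    have hv2 : ((e2f l : Fin p) : ℕ) = (j : ℕ) + (l : ℕ) := rfl
    omega
  have hnegsum : ∑ i, ν i * y2 i ^ 2 < 0 := by
    have hterm : ∀ i ∈ Finset.univ, ν i * y2 i ^ 2 ≤ 0 := by
      intro i _
      by_cases h : (j : ℕ) ≤ (i : ℕ)
      · have hνi : ν i ≤ ν j := hνmono j i (by rwa [Fin.le_def])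
        have : ν i < 0 := lt_of_le_of_lt hνi hneg
        nlinarith [sq_nonneg (y2 i)]
      · have hz : y2 i = 0 := by
          refine selMat_mulVec_zero e2f z2 i fun l hl => ?_
          have hv : ((e2f l : Fin p) : ℕ) = (i : ℕ) := congrArg Fin.val hl
          have hv2 : ((e2f l : Fin p) : ℕ) = (j : ℕ) + (l : ℕ) := rfl
          omega
        rw [hz]; simp
    have hstrict : ν i0 * y2 i0 ^ 2 < 0 := by
      have hνi : ν i0 ≤ ν j := hνmono j i0 (by rwa [Fin.le_def])
      have hν0 : ν i0 < 0 := lt_of_le_of_lt hνi hneg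
      have hne : y2 i0 ≠ 0 := hi0
      have h2 : 0 < y2 i0 ^ 2 := (sq_nonneg _).lt_of_ne (Ne.symm (pow_ne_zero 2 hne))
      nlinarith
    calc ∑ i, ν i * y2 i ^ 2 < ∑ _i : Fin p, (0 : ℝ) := by
          refine Finset.sum_lt_sum hterm ⟨i0, Finset.mem_univ i0, ?_⟩
          exact lt_of_lt_of_le hstrict (le_refl 0)
      _ = 0 := by simp
  rw [hq1'] at hq2'
  linarith [hq2', hnn, hnegsum]
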